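/- Let μ_x(y) be the relative margin defined by the recursion: μ_x(ε) = ρ(x), μ_x(y1) = μ_x(y) + 1, and μ_x(y0) = 0 if ρ(xy) > μ_x(y) = 0, otherwise μ_x(y) − 1, where ρ is the reach function. Then μ_x(y) is monotone in both arguments with respect to the coordinatewise partial order: if x ≤ x′ and y ≤ y′ (strings of matching lengths), then μ_x(y) ≤ μ_{x′}(y′). -/

import Mathlib

/-- Decompose a `Forall₂` relation when the left list ends in a snoc. -/
lemma forall₂_snoc_decomp {α β : Type*} {r : α → β → Prop} :
    ∀ (l : List α) (a : α) (m : List β), List.Forall₂ r (l ++ [a]) m →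
      ∃ m' b, m = m' ++ [b] ∧ List.Forall₂ r l m' ∧ r a b := by
  intro l
  induction l with
  | nil =>
    intro a m h
    rcases h with _ | ⟨hab, htail⟩
    rcases htail
    exact ⟨[], _, rfl, List.Forall₂.nil, hab⟩
  | cons x l ih =>
    intro a m h
    rcases h with _ | ⟨hxy, htail⟩
    obtain ⟨m', b, rfl, hm, hab⟩ := ih a _ htail
    exact ⟨_ :: m', b, rfl, List.Forall₂.cons hxy hm, hab⟩

/-- The relative margin `μ_x(y)` is monotone in both arguments with respect to the
coordinatewise partial order: `x ≤ x'` and `y ≤ y'` imply `μ_x(y) ≤ μ_{x'}(y')`. -/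
theorem relative_margin_monotone
    (ρ : List Bool → ℤ) (μ : List Bool → List Bool → ℤ)
    (hρ_nil : ρ [] = 0)
    (hρ_one : ∀ w : List Bool, ρ (w ++ [true]) = ρ w + 1)
    (hρ_zero : ∀ w : List Bool, ρ (w ++ [false]) = if 0 < ρ w then ρ w - 1 else 0)
    (hμ_nil : ∀ x : List Bool, μ x [] = ρ x)
    (hμ_one : ∀ x y : List Bool, μ x (y ++ [true]) = μ x y + 1)
    (hμ_zero : ∀ x y : List Bool,
      μ x (y ++ [false]) = if 0 < ρ (x ++ y) ∧ μ x y = 0 then 0 else μ x y - 1) :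
    ∀ x x' y y' : List Bool,
      List.Forall₂ (· ≤ ·) x x' → List.Forall₂ (· ≤ ·) y y' → μ x y ≤ μ x' y' := by
  have hρ_nonneg : ∀ w : List Bool, 0 ≤ ρ w := by
    intro w
    induction w using List.reverseRecOn with
    | nil => simp [hρ_nil]
    | append_singleton l a ih =>
      cases a
      · rw [hρ_zero]; split_ifs <;> omega
      · rw [hρ_one]; omega
  have hρ_mono : ∀ w w' : List Bool, List.Forall₂ (· ≤ ·) w w' → ρ w ≤ ρ w' := by
    intro w
    induction w using List.reverseRecOn with
    | nil =>
      intro w' h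
      rcases h; simp [hρ_nil]
    | append_singleton l a ih =>
      intro w' h
      obtain ⟨m', b, rfl, hm, hab⟩ := forall₂_snoc_decomp l a w' h
      have h1 := ih m' hm
      have h2 := hρ_nonneg m'
      cases a <;> cases b
      · rw [hρ_zero, hρ_zero]; split_ifs <;> omega
      · rw [hρ_zero, hρ_one]; split_ifs <;> omega
      · exact absurd hab (by simp)
      · rw [hρ_one, hρ_one]; omega
  intro x x' y y' hx hy
  induction y using List.reverseRecOn generalizing y' with
  | nil =>
    rcases hy
    rw [hμ_nil, hμ_nil]
    exact hρ_mono x x' hx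
  | append_singleton l a ih =>
    obtain ⟨m', b, rfl, hm, hab⟩ := forall₂_snoc_decomp l a y' hy
    have h1 := ih m' hm
    have hρ := hρ_mono (x ++ l) (x' ++ m') (List.rel_append hx hm)
    cases a <;> cases b
    · rw [hμ_zero, hμ_zero]
      split_ifs with hc hc' hc' <;> (try push_neg at *) <;> omega
    · rw [hμ_zero, hμ_one]
      split_ifs <;> omega
    · exact absurd hab (by simp)
    · rw [hμ_one, hμ_one]; omega
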